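/- Let 0 < ε ≤ 1/4. Consider the financial system on banks {1,…,6} with external assets e 1 = e 4 = 1 and e i = 0 otherwise; a CDS of notional 1 with debtor 1, creditor 2, reference bank 5; a debt contract 2→3 of notional 1/2; a CDS of notional 1 with debtor 4, creditor 5, reference bank 2; and a debt contract 5→6 of notional 4ε (all other notionals 0). Define the clearing map F : [0,1]^6 → [0,1]^6 coordinate-wise by F i (x) = min 1 (a i x / L i x) if L i x > 0 and F i (x) = 1 if L i x = 0. Then: (i) r = (1, 1, 1, 1, 0, 1) is a clearing vector, i.e. F r = r; (ii) the vector r′ = (1, 1 − 2ε, 1, 1, 1/2 + ε, 1) satisfies ‖F r′ − r′‖_∞ ≤ ε; and (iii) ‖r′ − r‖_∞ = 1/2 + ε > 1/2. Thus r′ is a weak ε-approximate fixed point of F whose ℓ∞-distance to the clearing vector r exceeds 1/2. -/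

import Mathlib

open Finset

/-- The liability of bank `i` to bank `j` under recovery-rate vector `r`. -/
def liab {n : ℕ} (c : Fin n → Fin n → ℝ) (cds : Fin n → Fin n → Fin n → ℝ)
    (r : Fin n → ℝ) (i j : Fin n) : ℝ :=
  c i j + ∑ R : Fin n, (1 - r R) * cds i j R

/-- The total liability of bank `i` under recovery-rate vector `r`. -/
def totLiab {n : ℕ} (c : Fin n → Fin n → ℝ) (cds : Fin n → Fin n → Fin n → ℝ)
    (r : Fin n → ℝ) (i : Fin n) : ℝ :=
  ∑ j : Fin n, liab c cds r i j

/-- The assets of bank `i` under recovery-rate vector `r`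
(external assets plus incoming payments `p j i r = r j * liab c cds r j i`). -/
def assets {n : ℕ} (e : Fin n → ℝ) (c : Fin n → Fin n → ℝ)
    (cds : Fin n → Fin n → Fin n → ℝ) (r : Fin n → ℝ) (i : Fin n) : ℝ :=
  e i + ∑ j : Fin n, r j * liab c cds r j i

/-- `r` is a clearing recovery-rate vector. -/
def IsClearing {n : ℕ} (e : Fin n → ℝ) (c : Fin n → Fin n → ℝ)
    (cds : Fin n → Fin n → Fin n → ℝ) (r : Fin n → ℝ) : Prop :=
  (∀ i, 0 ≤ r i ∧ r i ≤ 1) ∧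
  ∀ i, (0 < totLiab c cds r i →
          r i = min 1 (assets e c cds r i / totLiab c cds r i)) ∧
       (totLiab c cds r i = 0 → r i = 1)

/-- `(e, c, cds)` is a financial system. -/
def IsFinSys {n : ℕ} (e : Fin n → ℝ) (c : Fin n → Fin n → ℝ)
    (cds : Fin n → Fin n → Fin n → ℝ) : Prop :=
  (∀ i, 0 ≤ e i) ∧ (∀ i j, 0 ≤ c i j) ∧ (∀ i, c i i = 0) ∧
  (∀ i j R, 0 ≤ cds i j R) ∧
  (∀ i j R, ¬(i ≠ j ∧ i ≠ R ∧ j ≠ R) → cds i j R = 0)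

/-- External assets of the 6-bank example (banks 1..6 are indices 0..5):
banks 1 and 4 hold 1. -/
noncomputable def eW : Fin 6 → ℝ := fun i => if i = 0 ∨ i = 3 then 1 else 0

/-- Debt contracts of the 6-bank example: 2→3 of notional 1/2 and 5→6 of notional 4ε. -/
noncomputable def cW (ε : ℝ) : Fin 6 → Fin 6 → ℝ := fun i j =>
  if i = 1 ∧ j = 2 then 1/2 else if i = 4 ∧ j = 5 then 4 * ε else 0

/-- CDSes of the 6-bank example: (debtor 1, creditor 2, reference 5) and
(debtor 4, creditor 5, reference 2), each of notional 1. -/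
noncomputable def cdsW : Fin 6 → Fin 6 → Fin 6 → ℝ := fun i j R =>
  if (i = 0 ∧ j = 1 ∧ R = 4) ∨ (i = 3 ∧ j = 4 ∧ R = 1) then 1 else 0

open Classical in
/-- The clearing map of the 6-bank example. -/
noncomputable def FW (ε : ℝ) (x : Fin 6 → ℝ) (i : Fin 6) : ℝ :=
  if 0 < totLiab (cW ε) cdsW x i
  then min 1 (assets eW (cW ε) cdsW x i / totLiab (cW ε) cdsW x i)
  else 1


lemma vec6_four (a b c d e f : ℝ) : ![a,b,c,d,e,f] 4 = e := rfl
lemma vec6_five (a b c d e f : ℝ) : ![a,b,c,d,e,f] 5 = f := rfl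

set_option maxHeartbeats 1000000 in
/-- In the 6-bank example with `0 < ε ≤ 1/4`:  `r = (1,1,1,1,0,1)` is a clearing vector
(a fixed point of the clearing map `FW ε`), while `r' = (1, 1-2ε, 1, 1, 1/2+ε, 1)` is a
weak ε-approximate fixed point of `FW ε` whose ℓ∞-distance to `r` equals `1/2 + ε > 1/2`. -/
theorem weak_approx_far_from_fixed_point (ε : ℝ) (hε : 0 < ε) (hε' : ε ≤ 1/4) :
    IsClearing eW (cW ε) cdsW ![1, 1, 1, 1, 0, 1] ∧
    FW ε ![1, 1, 1, 1, 0, 1] = ![1, 1, 1, 1, 0, 1] ∧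
    (∀ i, |FW ε ![1, 1 - 2*ε, 1, 1, 1/2 + ε, 1] i -
            (![1, 1 - 2*ε, 1, 1, 1/2 + ε, 1] : Fin 6 → ℝ) i| ≤ ε) ∧
    (∀ i, |(![1, 1 - 2*ε, 1, 1, 1/2 + ε, 1] : Fin 6 → ℝ) i -
            (![1, 1, 1, 1, 0, 1] : Fin 6 → ℝ) i| ≤ 1/2 + ε) ∧
    (∃ i, |(![1, 1 - 2*ε, 1, 1, 1/2 + ε, 1] : Fin 6 → ℝ) i -
            (![1, 1, 1, 1, 0, 1] : Fin 6 → ℝ) i| = 1/2 + ε) ∧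
    (1/2 : ℝ) < 1/2 + ε := by
  have h1 : (0:ℝ) < 1/2 - ε := by linarith
  have h2 := hε.ne'
  refine ⟨⟨fun i => by fin_cases i <;> norm_num [vec6_four, vec6_five], fun i => by
    fin_cases i <;>
      simp [totLiab, assets, liab, eW, cW, cdsW, Fin.sum_univ_six, vec6_four, vec6_five] <;>
        norm_num [h2] <;> linarith⟩,
    ?_, ?_, ?_, ⟨4, by norm_num [vec6_four]; linarith⟩, by linarith⟩
  · funext i
    fin_cases i <;>
      simp [FW, totLiab, assets, liab, eW, cW, cdsW, Fin.sum_univ_six, vec6_four, vec6_five] <;>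
        norm_num [h2] <;> linarith
  · intro i
    fin_cases i <;>
      simp [FW, totLiab, assets, liab, eW, cW, cdsW, Fin.sum_univ_six, vec6_four, vec6_five] <;>
        norm_num [h2, abs_le] <;>
      first
        | (constructor <;> linarith)
        | linarith
        | skip
    all_goals
      have hA : (1:ℝ) ≤ (1 - (1/2+ε))⁻¹ := by
        rw [one_le_inv_iff₀]
        constructor <;> linarith
      have hB : (1:ℝ) ≤ ε⁻¹ * (1/2) := by
        rw [show ε⁻¹ * (1/2) = (2*ε)⁻¹ by ring, one_le_inv_iff₀]
        constructor <;> linarith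
      have hC : 2*ε/(4*ε) = 1/2 := by
        rw [div_eq_div_iff (by linarith) (by norm_num : (2:ℝ) ≠ 0)]
        ring
      simp only [min_def]
      split_ifs <;>
        first
          | (constructor <;> linarith)
          | (exact ⟨by linarith, Or.inr (by linarith)⟩)
          | linarith
  · intro i
    fin_cases i <;>
      norm_num [vec6_four, vec6_five, abs_le] <;>
      first
        | (constructor <;> linarith)
        | linarith
        | (rw [abs_of_pos hε]; linarith)
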